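/- Let s = 1 and θ > 0, ν real. Then lim_{z₁→-∞} r_B(z₀,z₁) = φ_B(z₀) := (1/θ²)(1/2 - 2θ + θ²) + (1/θ)(1/2 - 2θ + ν)z₀, where the limit is along real z₁ → -∞ and z₀ is a fixed complex number. -/

import Mathlib

set_option maxHeartbeats 1000000


open Filter

/-- with s = 1, the type-B stability function tends to
φ_B(z₀) as z₁ → -∞ along the reals. -/
theorem stmt_13 (θ ν : ℝ) (hθ : θ > 0) (z0 : ℂ) :
    Tendsto (fun z1 : ℝ =>
        1 + (z0 + (z1 : ℂ))
          + ((1/2 + ν : ℝ) : ℂ) * (z0 + (z1 : ℂ))^2 / (1 - (θ : ℂ) * (z1 : ℂ))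
          - (ν : ℂ) * (z0 + (z1 : ℂ))^2 / (1 - (θ : ℂ) * (z1 : ℂ))^2
          + ((1/2 - θ + ν : ℝ) : ℂ) * (θ : ℂ) * (z0 + (z1 : ℂ))^3
              / (1 - (θ : ℂ) * (z1 : ℂ))^2)
      atBot
      (nhds ((((1/(θ^2)) * (1/2 - 2*θ + θ^2) : ℝ) : ℂ)
        + (((1/θ) * (1/2 - 2*θ + ν) : ℝ) : ℂ) * z0)) := by
  have hθ' : (θ : ℂ) ≠ 0 := by exact_mod_cast hθ.ne'
  set c : ℂ := ((1/2 - θ + ν : ℝ) : ℂ) * θ * z0 + ((1/2 - θ : ℝ) : ℂ) with hc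
  set g : ℂ → ℂ := fun w =>
    1 + (w - 1) / (θ : ℂ) + z0 * ((θ : ℂ) * z0 * w + w - 1) + z0 * w
      + c * (z0 * w + (w - 1) / (θ : ℂ))^2 with hg
  -- w → 0
  have hlin : Tendsto (fun t : ℝ => 1 - θ * t) atBot atTop := by
    have h1 : Tendsto (fun t : ℝ => θ * t) atBot atBot :=
      Tendsto.const_mul_atBot hθ tendsto_id
    have h2 : Tendsto (fun t : ℝ => -(θ * t)) atBot atTop := tendsto_neg_atBot_atTop.comp h1
    have := tendsto_atTop_add_const_left atBot 1 h2
    simpa [sub_eq_add_neg] using this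
  have hwR : Tendsto (fun t : ℝ => (1 - θ * t)⁻¹) atBot (nhds 0) :=
    hlin.inv_tendsto_atTop
  have hw : Tendsto (fun t : ℝ => (1 - (θ : ℂ) * (t : ℂ))⁻¹) atBot (nhds 0) := by
    have : Tendsto (fun t : ℝ => (((1 - θ * t)⁻¹ : ℝ) : ℂ)) atBot (nhds ((0 : ℝ) : ℂ)) :=
      (Complex.continuous_ofReal.tendsto 0).comp hwR
    refine this.congr (fun t => ?_) |>.mono_right (by norm_num)
    push_cast
    ring
  have hgc : Continuous g := by
    simp only [hg, div_eq_mul_inv]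
    fun_prop
  have hlim : Tendsto (fun t : ℝ => g ((1 - (θ : ℂ) * (t : ℂ))⁻¹)) atBot (nhds (g 0)) :=
    (hgc.tendsto 0).comp hw
  have hg0 : g 0 = (((1/(θ^2)) * (1/2 - 2*θ + θ^2) : ℝ) : ℂ)
      + (((1/θ) * (1/2 - 2*θ + ν) : ℝ) : ℂ) * z0 := by
    simp only [hg, hc]
    push_cast
    field_simp
    ring
  rw [← hg0]
  refine hlim.congr' ?_
  filter_upwards [eventually_lt_atBot (0 : ℝ)] with t ht
  have hden : (1 : ℝ) - θ * t ≠ 0 := by nlinarith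
  have hdenC : (1 : ℂ) - (θ : ℂ) * (t : ℂ) ≠ 0 := by
    have := Complex.ofReal_ne_zero.mpr hden
    push_cast at this
    exact this
  symm
  simp only [hg, hc]
  push_cast
  have hdenC' : (1 : ℂ) - (t : ℂ) * (θ : ℂ) ≠ 0 := by rw [mul_comm]; exact hdenC
  field_simp [hdenC, hdenC', hθ']
  ring
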